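/- Let μ be a finite Borel measure on ℝ^d with closed support K_μ, let Λ ⊂ ℝ^d be countable, let φ : K_μ → ℝ^d be Borel measurable, and let ν = φ_*μ be the pushforward measure. Then E(Λ, φ) = {x ↦ e^{2πi λ·φ(x)} : λ ∈ Λ} is complete in L²(μ) if and only if φ is μ-essentially injective and E(Λ) = {y ↦ e^{2πi λ·y} : λ ∈ Λ} is complete in L²(ν). -/

import Mathlib

open MeasureTheory Filter Set
open scoped Real ENNReal Topology

noncomputable section

/-- `e2pi t = e^{2π i t}`. -/
def e2pi (t : ℝ) : ℂ := Complex.exp (2 * Real.pi * Complex.I * t)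

/-- The Euclidean dot product on `Fin d → ℝ`. -/
def dotp {d : ℕ} (a b : Fin d → ℝ) : ℝ := ∑ i, a i * b i

/-- `φ` is `μ`-essentially injective. -/
def EssInj {α β : Type*} [MeasurableSpace α] [MeasurableSpace β]
    (μ : Measure α) (φ : α → β) : Prop :=
  ∀ f : α → ℂ, MemLp f 2 μ →
    ∃ h : β → ℂ, MemLp h 2 (Measure.map φ μ) ∧ f =ᵐ[μ] fun x => h (φ x)

/-- The family `E(Λ, φ) = {x ↦ e^{2π i λ·φ(x)} : λ ∈ Λ}` is complete in `L²(μ)`: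
the only `f ∈ L²(μ)` orthogonal to every member of the family is `0`. -/
def CompleteExp {α : Type*} [MeasurableSpace α] {d : ℕ}
    (μ : Measure α) (Λ : Set (Fin d → ℝ)) (φ : α → Fin d → ℝ) : Prop :=
  ∀ g : α → ℂ, MemLp g 2 μ →
    (∀ lam ∈ Λ, ∫ x, g x * (starRingEnd ℂ) (e2pi (dotp lam (φ x))) ∂μ = 0) →
    g =ᵐ[μ] 0

theorem norm_e2pi (t : ℝ) : ‖e2pi t‖ = 1 := by
  have h : e2pi t = Complex.exp ((2 * Real.pi * t : ℝ) * Complex.I) := by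
    unfold e2pi; push_cast; ring_nf
  rw [h, Complex.norm_exp_ofReal_mul_I]

theorem measurable_elam {d : ℕ} (lam : Fin d → ℝ) :
    Measurable fun y : Fin d → ℝ => e2pi (dotp lam y) := by
  unfold e2pi dotp
  fun_prop

theorem memℒp_elam {d : ℕ} (ν : Measure (Fin d → ℝ)) [IsFiniteMeasure ν] (lam : Fin d → ℝ) :
    MemLp (fun y => e2pi (dotp lam y)) 2 ν :=
  MemLp.of_bound (measurable_elam lam).aestronglyMeasurable 1
    (Filter.Eventually.of_forall fun _ => le_of_eq (norm_e2pi _))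

/-- Pull back an a.e. equality along `φ`. -/
theorem ae_comp_of_ae_map {α β γ : Type*} [MeasurableSpace α] [MeasurableSpace β]
    {μ : Measure α} {φ : α → β} (hφ : Measurable φ) {h h' : β → γ}
    (hae : h =ᵐ[Measure.map φ μ] h') : (fun x => h (φ x)) =ᵐ[μ] fun x => h' (φ x) :=
  (Measure.tendsto_ae_map hφ.aemeasurable).eventually hae

/-- Push an a.e.-zero statement forward along `φ`. -/
theorem ae_zero_map_of_comp {α : Type*} [MeasurableSpace α] {β : Type*} [MeasurableSpace β]
    {μ : Measure α} {φ : α → β} (hφ : Measurable φ) {h : β → ℂ}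
    (hmeas : AEStronglyMeasurable h (Measure.map φ μ))
    (hz : (fun x => h (φ x)) =ᵐ[μ] 0) : h =ᵐ[Measure.map φ μ] 0 := by
  set h' := hmeas.mk h with hh'
  have h1 : h =ᵐ[Measure.map φ μ] h' := hmeas.ae_eq_mk
  have h2 : (fun x => h' (φ x)) =ᵐ[μ] 0 :=
    ((ae_comp_of_ae_map hφ h1).symm.trans hz)
  have hS : MeasurableSet {y | h' y ≠ 0} :=
    (hmeas.stronglyMeasurable_mk.measurable (MeasurableSet.singleton 0).compl)
  have hμ0 : μ (φ ⁻¹' {y | h' y ≠ 0}) = 0 := by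
    have := h2
    rw [Filter.EventuallyEq, ae_iff] at this
    simpa using this
  have hν0 : (Measure.map φ μ) {y | h' y ≠ 0} = 0 := by
    rw [Measure.map_apply hφ hS]; exact hμ0
  have h3 : h' =ᵐ[Measure.map φ μ] 0 := by
    rw [Filter.EventuallyEq, ae_iff]; simpa using hν0
  exact h1.trans h3

/-- `E(Λ, φ)` is complete in `L²(μ)` iff `φ` is `μ`-essentially injective
and `E(Λ)` is complete in `L²(ν)`, where `ν = φ⋆μ`. -/
theorem statement2 {d : ℕ} (μ : Measure (Fin d → ℝ)) [IsFiniteMeasure μ]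
    (Λ : Set (Fin d → ℝ)) (hΛ : Λ.Countable)
    (φ : (Fin d → ℝ) → (Fin d → ℝ)) (hφ : Measurable φ) :
    CompleteExp μ Λ φ ↔ (EssInj μ φ ∧ CompleteExp (Measure.map φ μ) Λ id) := by
  set ν := Measure.map φ μ with hν
  haveI : IsFiniteMeasure ν := Measure.isFiniteMeasure_map μ φ
  have hmp : MeasurePreserving φ μ ν := ⟨hφ, rfl⟩
  -- change of variables for the relevant integrals
  have hcov : ∀ (h : (Fin d → ℝ) → ℂ), AEStronglyMeasurable h ν → ∀ lam : Fin d → ℝ,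
      ∫ y, h y * (starRingEnd ℂ) (e2pi (dotp lam y)) ∂ν
        = ∫ x, h (φ x) * (starRingEnd ℂ) (e2pi (dotp lam (φ x))) ∂μ := by
    intro h hh lam
    rw [integral_map hφ.aemeasurable]
    exact hh.mul ((Complex.continuous_conj.measurable.comp (measurable_elam lam)).aestronglyMeasurable)
  constructor
  · -- forward direction
    intro H
    constructor
    · -- essential injectivity
      intro f hf
      let T := MeasureTheory.Lp.compMeasurePreservingₗᵢ (E := ℂ) (p := 2) ℂ φ hmp
      let V : Submodule ℂ (Lp ℂ 2 μ) := LinearMap.range T.toLinearMap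
      have hVclosed : IsClosed (V : Set (Lp ℂ 2 μ)) := by
        have : range (T : Lp ℂ 2 ν → Lp ℂ 2 μ) = (V : Set (Lp ℂ 2 μ)) := by
          ext x; simp [V, LinearMap.mem_range, Set.mem_range]
        rw [← this]
        exact T.isometry.isClosedEmbedding.isClosed_range
      haveI : CompleteSpace V := hVclosed.completeSpace_coe
      set F : Lp ℂ 2 μ := hf.toLp f with hF
      obtain ⟨v, hvV, w, hw, hvw⟩ := V.exists_add_mem_mem_orthogonal F
      obtain ⟨Hν, hHν⟩ := hvV
      -- w is orthogonal to all exponentials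
      have hwzero : (⇑w : (Fin d → ℝ) → ℂ) =ᵐ[μ] 0 := by
        apply H w (Lp.memLp w)
        intro lam _
        set Eν : Lp ℂ 2 ν := (memℒp_elam ν lam).toLp _ with hEν
        have hEV : (T Eν : Lp ℂ 2 μ) ∈ V := ⟨Eν, rfl⟩
        have horth : (inner ℂ (T Eν) w : ℂ) = 0 := by
          exact (Submodule.mem_orthogonal V w).1 hw _ hEV
        have hEae : (⇑(T Eν) : (Fin d → ℝ) → ℂ) =ᵐ[μ] fun x => e2pi (dotp lam (φ x)) := by
          have h1 : (⇑(T Eν) : (Fin d → ℝ) → ℂ) =ᵐ[μ] (⇑Eν ∘ φ) :=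
            MeasureTheory.Lp.coeFn_compMeasurePreserving Eν hmp
          have h2 : (⇑Eν : (Fin d → ℝ) → ℂ) =ᵐ[ν] fun y => e2pi (dotp lam y) :=
            (memℒp_elam ν lam).coeFn_toLp
          exact h1.trans (ae_comp_of_ae_map hφ h2)
        calc ∫ x, w x * (starRingEnd ℂ) (e2pi (dotp lam (φ x))) ∂μ
            = ∫ x, (starRingEnd ℂ) ((T Eν) x) * w x ∂μ := by
              apply integral_congr_ae
              filter_upwards [hEae] with x hx
              rw [hx]; ring
          _ = (inner ℂ (T Eν) w : ℂ) := by
            rw [MeasureTheory.L2.inner_def]; simp only [RCLike.inner_apply']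
          _ = 0 := horth
      refine ⟨⇑Hν, ?_, ?_⟩
      · exact Lp.memLp Hν
      · have h1 : f =ᵐ[μ] ⇑F := (hf.coeFn_toLp).symm
        have h2 : (⇑F : (Fin d → ℝ) → ℂ) =ᵐ[μ] ⇑v + ⇑w := by rw [hvw]; exact Lp.coeFn_add v w
        have h3 : (⇑v + ⇑w : (Fin d → ℝ) → ℂ) =ᵐ[μ] ⇑v := by
          filter_upwards [hwzero] with x hx
          simp [hx]
        have h4 : (⇑v : (Fin d → ℝ) → ℂ) =ᵐ[μ] fun x => Hν (φ x) := by
          rw [← hHν]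
          exact MeasureTheory.Lp.coeFn_compMeasurePreserving Hν hmp
        exact ((h1.trans h2).trans h3).trans h4
    · -- completeness downstairs
      intro h hh hint
      have hg : MemLp (fun x => h (φ x)) 2 μ := hh.comp_measurePreserving hmp
      have hz : (fun x => h (φ x)) =ᵐ[μ] 0 := by
        apply H _ hg
        intro lam hlam
        rw [← hcov h hh.aestronglyMeasurable lam]
        simpa using hint lam hlam
      exact ae_zero_map_of_comp hφ hh.aestronglyMeasurable hz
  · -- reverse direction
    rintro ⟨hinj, hcomp⟩ g hg hint
    obtain ⟨h, hh, hge⟩ := hinj g hg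
    have hz : h =ᵐ[ν] 0 := by
      apply hcomp h hh
      intro lam hlam
      have : ∫ y, h y * (starRingEnd ℂ) (e2pi (dotp lam y)) ∂ν = 0 := by
        rw [hcov h hh.aestronglyMeasurable lam]
        rw [← hint lam hlam]
        apply integral_congr_ae
        filter_upwards [hge] with x hx
        rw [hx]
      simpa using this
    have : (fun x => h (φ x)) =ᵐ[μ] 0 := by
      have := ae_comp_of_ae_map hφ hz
      exact this
    exact hge.trans this
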